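/- Let A and B be bounded linear operators on a Banach space X. Then the Yosida distance d_Y(A,B) := limsup_{μ→+∞} ‖A_μ − B_μ‖ equals ‖A − B‖, where T_μ := μ²R(μ,T) − μI denotes the Yosida approximation. -/

import Mathlib

open Filter

lemma yosida_aux_unit {X : Type*} [NormedAddCommGroup X] [NormedSpace ℂ X] [CompleteSpace X]
    (T : X →L[ℂ] X) {μ : ℝ} (hμ : ‖T‖ + 1 ≤ μ) :
    IsUnit ((1 : X →L[ℂ] X) - (μ : ℂ)⁻¹ • T) := by
  have hμ0 : (0:ℝ) < μ := lt_of_lt_of_le (by positivity) hμ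
  have hlt : ‖(μ : ℂ)⁻¹ • T‖ < 1 := by
    have h := norm_smul ((μ : ℂ)⁻¹) T
    rw [h, norm_inv, Complex.norm_real, Real.norm_eq_abs, abs_of_pos hμ0,
      inv_mul_lt_iff₀ hμ0, mul_one]
    linarith
  exact (Units.oneSub _ hlt).isUnit

lemma yosida_aux_inv {X : Type*} [NormedAddCommGroup X] [NormedSpace ℂ X] [CompleteSpace X]
    (T : X →L[ℂ] X) {μ : ℝ} (hμ : ‖T‖ + 1 ≤ μ) :
    Ring.inverse ((μ : ℂ) • (1 : X →L[ℂ] X) - T)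
      = (μ : ℂ)⁻¹ • Ring.inverse ((1 : X →L[ℂ] X) - (μ : ℂ)⁻¹ • T) := by
  have hμ0 : (0:ℝ) < μ := lt_of_lt_of_le (by positivity) hμ
  have hμc : (μ : ℂ) ≠ 0 := by exact_mod_cast hμ0.ne'
  have hu := yosida_aux_unit T hμ
  set I := Ring.inverse ((1 : X →L[ℂ] X) - (μ : ℂ)⁻¹ • T) with hI
  have hfac : (μ : ℂ) • ((1 : X →L[ℂ] X) - (μ : ℂ)⁻¹ • T)
      = (μ : ℂ) • (1 : X →L[ℂ] X) - T := by
    rw [smul_sub, smul_smul, mul_inv_cancel₀ hμc, one_smul]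
  have h1 : ((μ : ℂ) • (1 : X →L[ℂ] X) - T) * ((μ : ℂ)⁻¹ • I) = 1 := by
    rw [← hfac, smul_mul_assoc, mul_smul_comm, smul_smul, mul_inv_cancel₀ hμc, one_smul,
      Ring.mul_inverse_cancel _ hu]
  have h2 : ((μ : ℂ)⁻¹ • I) * ((μ : ℂ) • (1 : X →L[ℂ] X) - T) = 1 := by
    rw [← hfac, smul_mul_assoc, mul_smul_comm, smul_smul, inv_mul_cancel₀ hμc, one_smul,
      Ring.inverse_mul_cancel _ hu]
  exact Ring.inverse_unit ⟨_, (μ : ℂ)⁻¹ • I, h1, h2⟩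

/-- For bounded linear operators `A`, `B` on a Banach space `X`, the Yosida
distance `d_Y(A,B) = limsup_{μ→+∞} ‖A_μ − B_μ‖` equals `‖A − B‖`, where
`T_μ = μ²R(μ,T) − μI` is the Yosida approximation. -/
theorem yosida_stmt3 {X : Type*} [NormedAddCommGroup X] [NormedSpace ℂ X] [CompleteSpace X]
    (A B : X →L[ℂ] X) :
    Filter.limsup (fun μ : ℝ =>
      ‖((μ : ℂ) ^ 2 • Ring.inverse ((μ : ℂ) • (1 : X →L[ℂ] X) - A) - (μ : ℂ) • 1)
        - ((μ : ℂ) ^ 2 • Ring.inverse ((μ : ℂ) • (1 : X →L[ℂ] X) - B) - (μ : ℂ) • 1)‖)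
      atTop = ‖A - B‖ := by
  set g : ℝ → (X →L[ℂ] X) := fun μ =>
    Ring.inverse ((1 : X →L[ℂ] X) - (μ : ℂ)⁻¹ • A) * (A - B)
      * Ring.inverse ((1 : X →L[ℂ] X) - (μ : ℂ)⁻¹ • B) with hg
  -- the inner factor tends to 1
  have hinv0 : Tendsto (fun μ : ℝ => ((μ : ℂ))⁻¹) atTop (nhds 0) := by
    have : Tendsto (fun μ : ℝ => ((μ⁻¹ : ℝ) : ℂ)) atTop (nhds ((0:ℝ):ℂ)) :=
      (Complex.continuous_ofReal.tendsto _).comp tendsto_inv_atTop_zero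
    simpa using this
  have hlim : ∀ T : X →L[ℂ] X,
      Tendsto (fun μ : ℝ => Ring.inverse ((1 : X →L[ℂ] X) - (μ : ℂ)⁻¹ • T)) atTop
        (nhds 1) := by
    intro T
    have hbase : Tendsto (fun μ : ℝ => (1 : X →L[ℂ] X) - (μ : ℂ)⁻¹ • T) atTop
        (nhds (1 : X →L[ℂ] X)) := by
      have h1 := (hinv0.smul_const T)
      have h2 : Tendsto (fun μ : ℝ => (1 : X →L[ℂ] X) - (μ : ℂ)⁻¹ • T) atTop
          (nhds ((1 : X →L[ℂ] X) - (0 : ℂ) • T)) := tendsto_const_nhds.sub h1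
      simpa using h2
    have hcont : ContinuousAt (Ring.inverse : (X →L[ℂ] X) → _) (1 : X →L[ℂ] X) :=
      NormedRing.inverse_continuousAt (1 : (X →L[ℂ] X)ˣ)
    have := hcont.tendsto.comp hbase
    simpa [Function.comp_def] using this
  have hgt : Tendsto g atTop (nhds (A - B)) := by
    have h1 : Tendsto (fun μ : ℝ => Ring.inverse ((1 : X →L[ℂ] X) - (μ : ℂ)⁻¹ • A) * (A - B)
        * Ring.inverse ((1 : X →L[ℂ] X) - (μ : ℂ)⁻¹ • B)) atTop
        (nhds ((1 : X →L[ℂ] X) * (A - B) * 1)) :=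
      ((hlim A).mul (tendsto_const_nhds (x := A - B))).mul (hlim B)
    simpa [hg] using h1
  -- eventual equality of the two functions
  have hev : ∀ᶠ μ : ℝ in atTop,
      ‖((μ : ℂ) ^ 2 • Ring.inverse ((μ : ℂ) • (1 : X →L[ℂ] X) - A) - (μ : ℂ) • 1)
        - ((μ : ℂ) ^ 2 • Ring.inverse ((μ : ℂ) • (1 : X →L[ℂ] X) - B) - (μ : ℂ) • 1)‖
      = ‖g μ‖ := by
    filter_upwards [eventually_ge_atTop (max (‖A‖ + 1) (‖B‖ + 1))] with μ hμ
    have hA : ‖A‖ + 1 ≤ μ := le_trans (le_max_left _ _) hμ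
    have hB : ‖B‖ + 1 ≤ μ := le_trans (le_max_right _ _) hμ
    have hμ0 : (0:ℝ) < μ := lt_of_lt_of_le (by positivity) hA
    have hμc : (μ : ℂ) ≠ 0 := by exact_mod_cast hμ0.ne'
    have huA := yosida_aux_unit A hA
    have huB := yosida_aux_unit B hB
    set Ia := Ring.inverse ((1 : X →L[ℂ] X) - (μ : ℂ)⁻¹ • A) with hIa
    set Ib := Ring.inverse ((1 : X →L[ℂ] X) - (μ : ℂ)⁻¹ • B) with hIb
    have hsq : ∀ T : X →L[ℂ] X,
        (μ : ℂ) ^ 2 • ((μ : ℂ)⁻¹ • Ring.inverse ((1 : X →L[ℂ] X) - (μ : ℂ)⁻¹ • T))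
          = (μ : ℂ) • Ring.inverse ((1 : X →L[ℂ] X) - (μ : ℂ)⁻¹ • T) := by
      intro T
      rw [smul_smul, sq, mul_assoc, mul_inv_cancel₀ hμc, mul_one]
    rw [yosida_aux_inv A hA, yosida_aux_inv B hB, hsq A, hsq B, ← hIa, ← hIb]
    congr 1
    have key : Ia - Ib = Ia * ((μ : ℂ)⁻¹ • (A - B)) * Ib := by
      have e1 : Ia * ((1 : X →L[ℂ] X) - (μ : ℂ)⁻¹ • B) * Ib = Ia := by
        rw [mul_assoc, Ring.mul_inverse_cancel _ huB, mul_one]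
      have e2 : Ia * ((1 : X →L[ℂ] X) - (μ : ℂ)⁻¹ • A) * Ib = Ib := by
        rw [hIa, Ring.inverse_mul_cancel _ huA, one_mul]
      calc Ia - Ib = Ia * ((1 : X →L[ℂ] X) - (μ : ℂ)⁻¹ • B) * Ib
            - Ia * ((1 : X →L[ℂ] X) - (μ : ℂ)⁻¹ • A) * Ib := by rw [e1, e2]
        _ = Ia * ((μ : ℂ)⁻¹ • (A - B)) * Ib := by
            rw [← sub_mul, ← mul_sub]; congr 2
            rw [smul_sub]; abel
    have : ((μ : ℂ) • Ia - (μ : ℂ) • 1) - ((μ : ℂ) • Ib - (μ : ℂ) • 1)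
        = (μ : ℂ) • (Ia - Ib) := by rw [smul_sub]; abel
    rw [this, key, hg]
    simp only [smul_mul_assoc, mul_smul_comm, smul_smul]
    rw [mul_inv_cancel₀ hμc, one_smul]
  rw [Filter.limsup_congr hev]
  exact (hgt.norm).limsup_eq
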